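/- arXiv:1505.03678 — 8 statements merged into one kernel-verified Lean document; each statement's English description precedes it below -/
import Mathlib

section
/- For a real symmetric positive definite n×n matrix A with smallest eigenvalue λ₁ and largest eigenvalue λₙ, the minimum over nonzero vectors x of ⟨Ax,x⟩/(‖Ax‖‖x‖) equals 2√(λ₁λₙ)/(λ₁+λₙ). -/
open scoped Matrix.Norms.L2Operator RealInnerProductSpace

/-- The "antieigenvalue" Rayleigh-type quotient ⟨Ax,x⟩/(‖Ax‖‖x‖). -/
noncomputable def rq {n : ℕ} (A : Matrix (Fin n) (Fin n) ℝ)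
    (x : EuclideanSpace ℝ (Fin n)) : ℝ :=
  ⟪Matrix.toEuclideanLin A x, x⟫ / (‖Matrix.toEuclideanLin A x‖ * ‖x‖)

/-- μ is an eigenvalue of A. -/
def IsEigenvalue {n : ℕ} (A : Matrix (Fin n) (Fin n) ℝ) (μ : ℝ) : Prop :=
  ∃ x : EuclideanSpace ℝ (Fin n), x ≠ 0 ∧ Matrix.toEuclideanLin A x = μ • x

section Aux

open scoped Matrix

variable {n : ℕ} {A : Matrix (Fin n) (Fin n) ℝ}

lemma aux_inner_pos (hPD : A.PosDef) (x : EuclideanSpace ℝ (Fin n)) (hx : x ≠ 0) :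
    0 < ⟪Matrix.toEuclideanLin A x, x⟫ := by
  have h := hPD.dotProduct_mulVec_pos (x := WithLp.equiv 2 _ x) (by simpa using hx)
  simp only [star_trivial, dotProduct] at h
  calc 0 < ∑ i, (WithLp.equiv 2 _ x) i * (A *ᵥ (WithLp.equiv 2 _ x)) i := h
    _ = ⟪Matrix.toEuclideanLin A x, x⟫ := by
        simp [PiLp.inner_apply, Matrix.toEuclideanLin_apply, RCLike.inner_apply, mul_comm]

lemma aux_apply_basis (hA : A.IsHermitian) (j : Fin n) :
    Matrix.toEuclideanLin A (hA.eigenvectorBasis j) = hA.eigenvalues j • hA.eigenvectorBasis j := by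
  apply (WithLp.equiv 2 _).injective
  simpa using hA.mulVec_eigenvectorBasis j

lemma aux_expand (hA : A.IsHermitian) (x : EuclideanSpace ℝ (Fin n)) :
    ⟪Matrix.toEuclideanLin A x, x⟫ = ∑ i, hA.eigenvalues i * ⟪hA.eigenvectorBasis i, x⟫ ^ 2 ∧
    ‖Matrix.toEuclideanLin A x‖ ^ 2 = ∑ i, (hA.eigenvalues i * ⟪hA.eigenvectorBasis i, x⟫) ^ 2 ∧
    ‖x‖ ^ 2 = ∑ i, ⟪hA.eigenvectorBasis i, x⟫ ^ 2 := by
  set T := Matrix.toEuclideanLin A with hT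
  have hS : T.IsSymmetric := Matrix.isHermitian_iff_isSymmetric.mp hA
  have hTb : ∀ y j, ⟪T y, hA.eigenvectorBasis j⟫ = hA.eigenvalues j * ⟪hA.eigenvectorBasis j, y⟫ := by
    intro y j
    rw [real_inner_comm, ← hS, aux_apply_basis hA j, real_inner_smul_left]
  refine ⟨?_, ?_, ?_⟩
  · rw [← (hA.eigenvectorBasis).sum_inner_mul_inner (T x) x]
    exact Finset.sum_congr rfl fun i _ => by rw [hTb]; ring
  · rw [← real_inner_self_eq_norm_sq, ← (hA.eigenvectorBasis).sum_inner_mul_inner (T x) (T x)]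
    refine Finset.sum_congr rfl fun i _ => by
      rw [hTb, real_inner_comm (T x), hTb]; ring
  · rw [← real_inner_self_eq_norm_sq, ← (hA.eigenvectorBasis).sum_inner_mul_inner x x]
    exact Finset.sum_congr rfl fun i _ => by rw [real_inner_comm]; ring

end Aux

theorem first_antieigenvalue_formula {n : ℕ} (A : Matrix (Fin n) (Fin n) ℝ)
    (hSymm : A.IsSymm) (hPD : A.PosDef) (lam1 lamn : ℝ)
    (h1 : IsEigenvalue A lam1) (hn : IsEigenvalue A lamn)
    (hbound : ∀ μ, IsEigenvalue A μ → lam1 ≤ μ ∧ μ ≤ lamn) :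
    IsLeast {r : ℝ | ∃ x : EuclideanSpace ℝ (Fin n), x ≠ 0 ∧ r = rq A x}
      (2 * Real.sqrt (lam1 * lamn) / (lam1 + lamn)) := by
  classical
  have hA : A.IsHermitian := hPD.1
  set T := Matrix.toEuclideanLin A with hT
  have hS : T.IsSymmetric := Matrix.isHermitian_iff_isSymmetric.mp hA
  obtain ⟨u, hu0, hu⟩ := h1
  obtain ⟨v, hv0, hv⟩ := hn
  have huu : 0 < ⟪u, u⟫ := by
    rw [real_inner_self_eq_norm_sq]; exact pow_pos (norm_pos_iff.mpr hu0) 2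
  have hvv : 0 < ⟪v, v⟫ := by
    rw [real_inner_self_eq_norm_sq]; exact pow_pos (norm_pos_iff.mpr hv0) 2
  have hl1 : 0 < lam1 := by
    have h := aux_inner_pos hPD u hu0
    rw [hu, real_inner_smul_left] at h
    nlinarith
  have hln : 0 < lamn := by
    have h := aux_inner_pos hPD v hv0
    rw [hv, real_inner_smul_left] at h
    nlinarith
  have hsumpos : 0 < lam1 + lamn := by linarith
  set s := Real.sqrt (lam1 * lamn) with hsdef
  have hs2 : s ^ 2 = lam1 * lamn := Real.sq_sqrt (by positivity)
  have hspos : 0 < s := Real.sqrt_pos.mpr (by positivity)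
  constructor
  · -- membership
    by_cases hEq : lam1 = lamn
    · refine ⟨u, hu0, ?_⟩
      have hnu : 0 < ‖u‖ := norm_pos_iff.mpr hu0
      have hval : s = lam1 := by
        rw [hsdef, ← hEq, Real.sqrt_mul_self hl1.le]
      simp only [rq]
      rw [← hT, hu, real_inner_smul_left, norm_smul, Real.norm_eq_abs,
        abs_of_pos hl1, real_inner_self_eq_norm_sq]
      rw [hval, ← hEq]
      field_simp
      ring
    · have horth : ⟪u, v⟫ = 0 := by
        have h := hS u v
        rw [hu, hv, real_inner_smul_left, real_inner_smul_right] at h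
        have : (lam1 - lamn) * ⟪u, v⟫ = 0 := by ring_nf; linarith
        rcases mul_eq_zero.mp this with h' | h'
        · exact absurd (by linarith : lam1 = lamn) hEq
        · exact h'
      have hnu : (0:ℝ) < ‖u‖ := norm_pos_iff.mpr hu0
      have hnv : (0:ℝ) < ‖v‖ := norm_pos_iff.mpr hv0
      set a := Real.sqrt lamn / ‖u‖ with hadef
      set b := Real.sqrt lam1 / ‖v‖ with hbdef
      have ha2 : a ^ 2 * ⟪u, u⟫ = lamn := by
        rw [hadef, real_inner_self_eq_norm_sq, div_pow]
        rw [Real.sq_sqrt hln.le]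
        field_simp
      have hb2 : b ^ 2 * ⟪v, v⟫ = lam1 := by
        rw [hbdef, real_inner_self_eq_norm_sq, div_pow]
        rw [Real.sq_sqrt hl1.le]
        field_simp
      set x := a • u + b • v with hxdef
      have hvu : ⟪v, u⟫ = 0 := by rw [real_inner_comm]; exact horth
      have hxx : ⟪x, x⟫ = lamn + lam1 := by
        rw [hxdef]
        simp only [inner_add_left, inner_add_right, real_inner_smul_left, real_inner_smul_right,
          horth, hvu, mul_zero, add_zero, zero_add]
        linear_combination ha2 + hb2
      have hx0 : x ≠ 0 := by
        intro h0
        rw [h0, inner_zero_left] at hxx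
        linarith
      have hTx : T x = (a * lam1) • u + (b * lamn) • v := by
        rw [hxdef, map_add, map_smul, map_smul, hu, hv, smul_smul, smul_smul]
      have hTxx : ⟪T x, x⟫ = 2 * (lam1 * lamn) := by
        rw [hTx, hxdef]
        simp only [inner_add_left, inner_add_right, real_inner_smul_left, real_inner_smul_right,
          horth, hvu, mul_zero, add_zero, zero_add]
        linear_combination lam1 * ha2 + lamn * hb2
      have hTxTx : ⟪T x, T x⟫ = lam1 * lamn * (lam1 + lamn) := by
        rw [hTx]
        simp only [inner_add_left, inner_add_right, real_inner_smul_left, real_inner_smul_right,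
          horth, hvu, mul_zero, add_zero, zero_add]
        linear_combination lam1 ^ 2 * ha2 + lamn ^ 2 * hb2
      have hnx : ‖x‖ = Real.sqrt (lamn + lam1) := by
        rw [← Real.sqrt_sq (norm_nonneg x), ← real_inner_self_eq_norm_sq, hxx]
      have hnTx : ‖T x‖ = Real.sqrt (lam1 * lamn * (lam1 + lamn)) := by
        rw [← Real.sqrt_sq (norm_nonneg (T x)), ← real_inner_self_eq_norm_sq, hTxTx]
      refine ⟨x, hx0, ?_⟩
      simp only [rq]
      rw [← hT, hTxx, hnx, hnTx]
      have hd : Real.sqrt (lam1 * lamn * (lam1 + lamn)) * Real.sqrt (lamn + lam1)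
          = s * (lam1 + lamn) := by
        rw [Real.sqrt_mul (by positivity), add_comm lamn lam1, mul_assoc,
          Real.mul_self_sqrt hsumpos.le]
      rw [hd]
      rw [div_eq_div_iff (by positivity) (by positivity)]
      linear_combination (2 * (lam1 + lamn)) * hs2
  · -- lower bound
    rintro r ⟨x, hx0, rfl⟩
    set bb := hA.eigenvectorBasis with hbb
    set μ := hA.eigenvalues with hμ
    have hμpos : ∀ i, 0 < μ i := fun i => hPD.eigenvalues_pos i
    have hμb : ∀ i, lam1 ≤ μ i ∧ μ i ≤ lamn := fun i =>
      hbound (μ i) ⟨bb i, bb.orthonormal.ne_zero i, aux_apply_basis hA i⟩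
    obtain ⟨e1, e2, e3⟩ := aux_expand hA x
    have hnx : 0 < ‖x‖ := norm_pos_iff.mpr hx0
    have hTx0 : T x ≠ 0 := by
      intro h0
      have := aux_inner_pos hPD x hx0
      rw [← hT, h0, inner_zero_left] at this
      linarith
    have hnTx : 0 < ‖T x‖ := norm_pos_iff.mpr hTx0
    have key : ‖T x‖ ^ 2 + lam1 * lamn * ‖x‖ ^ 2 ≤ (lam1 + lamn) * ⟪T x, x⟫ := by
      rw [e1, e2, e3, Finset.mul_sum, Finset.mul_sum, ← Finset.sum_add_distrib]
      apply Finset.sum_le_sum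
      intro i _
      obtain ⟨hL, hR⟩ := hμb i
      nlinarith [sq_nonneg (⟪bb i, x⟫), mul_nonneg (mul_nonneg (sq_nonneg (⟪bb i, x⟫))
        (sub_nonneg.mpr hL)) (sub_nonneg.mpr hR)]
    have amgm : 2 * s * (‖T x‖ * ‖x‖) ≤ ‖T x‖ ^ 2 + lam1 * lamn * ‖x‖ ^ 2 := by
      nlinarith [sq_nonneg (‖T x‖ - s * ‖x‖), hs2]
    simp only [rq]
    rw [← hT, div_le_div_iff₀ hsumpos (by positivity)]
    nlinarith [key, amgm]
end

section
/- For a real symmetric positive definite n×n matrix A with smallest eigenvalue λ₁ and largest eigenvalue λₙ, the minimum over ε > 0 of the operator norm ‖εA − I‖ equals (λₙ − λ₁)/(λₙ + λ₁). -/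
open scoped Matrix.Norms.L2Operator RealInnerProductSpace

-- component-wise norm comparison on EuclideanSpace
lemma norm_le_of_comp {n : ℕ} {c : ℝ} (hc : 0 ≤ c) (y z : EuclideanSpace ℝ (Fin n))
    (h : ∀ i, |y i| ≤ c * |z i|) : ‖y‖ ≤ c * ‖z‖ := by
  rw [EuclideanSpace.norm_eq, EuclideanSpace.norm_eq]
  have hsum : ∑ i, ‖y i‖ ^ 2 ≤ c ^ 2 * ∑ i, ‖z i‖ ^ 2 := by
    rw [Finset.mul_sum]
    refine Finset.sum_le_sum fun i _ => ?_
    have := h i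
    rw [Real.norm_eq_abs, Real.norm_eq_abs]
    nlinarith [abs_nonneg (y i), abs_nonneg (z i)]
  calc Real.sqrt (∑ i, ‖y i‖ ^ 2) ≤ Real.sqrt (c ^ 2 * ∑ i, ‖z i‖ ^ 2) :=
        Real.sqrt_le_sqrt hsum
    _ = c * Real.sqrt (∑ i, ‖z i‖ ^ 2) := by
        rw [Real.sqrt_mul (sq_nonneg c), Real.sqrt_sq hc]

-- eigenvalue gives lower bound on matrix L2 operator norm
lemma eig_le_norm {n : ℕ} (M : Matrix (Fin n) (Fin n) ℝ) {μ : ℝ}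
    {x : EuclideanSpace ℝ (Fin n)} (hx : x ≠ 0)
    (hMx : Matrix.toEuclideanLin M x = μ • x) : |μ| ≤ ‖M‖ := by
  have h := ((Matrix.toEuclideanLin.trans LinearMap.toContinuousLinearMap) M).le_opNorm x
  rw [← Matrix.l2_opNorm_def] at h
  have hx' : 0 < ‖x‖ := norm_pos_iff.mpr hx
  have : ‖(Matrix.toEuclideanLin.trans LinearMap.toContinuousLinearMap) M x‖ = |μ| * ‖x‖ := by
    simp [LinearEquiv.trans_apply, hMx, norm_smul, Real.norm_eq_abs]
  rw [this] at h
  exact le_of_mul_le_mul_right h hx'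

-- upper bound on matrix norm from eigenvalue bounds (symmetric case)
lemma norm_le_of_eig {n : ℕ} (M : Matrix (Fin n) (Fin n) ℝ) (hM : M.IsHermitian) {c : ℝ}
    (hc : 0 ≤ c)
    (h : ∀ μ : ℝ, (∃ x : EuclideanSpace ℝ (Fin n), x ≠ 0 ∧
        Matrix.toEuclideanLin M x = μ • x) → |μ| ≤ c) :
    ‖M‖ ≤ c := by
  have hT : (Matrix.toEuclideanLin M).IsSymmetric :=
    Matrix.isHermitian_iff_isSymmetric.mp hM
  set T := Matrix.toEuclideanLin M with hTdef
  have hrank : Module.finrank ℝ (EuclideanSpace ℝ (Fin n)) = n := finrank_euclideanSpace_fin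
  set b := hT.eigenvectorBasis hrank with hb
  set μ := hT.eigenvalues hrank with hμ
  have hμle : ∀ i, |μ i| ≤ c := by
    intro i
    refine h (μ i) ⟨b i, ?_, hT.apply_eigenvectorBasis hrank i⟩
    have := b.orthonormal.1 i
    intro h0
    rw [h0] at this
    simp at this
  rw [Matrix.l2_opNorm_def]
  refine ContinuousLinearMap.opNorm_le_bound _ hc fun x => ?_
  have key : ∀ i, b.repr (T x) i = μ i * b.repr x i := by
    intro i
    rw [b.repr_apply_apply, b.repr_apply_apply, ← hT (b i) x,
      hT.apply_eigenvectorBasis hrank i, real_inner_smul_left]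
    norm_cast
  have h1 : ‖(Matrix.toEuclideanLin.trans LinearMap.toContinuousLinearMap) M x‖ = ‖T x‖ := rfl
  rw [h1, ← b.repr.norm_map (T x), ← b.repr.norm_map x]
  refine norm_le_of_comp hc _ _ fun i => ?_
  rw [key i, abs_mul]
  exact mul_le_mul_of_nonneg_right (hμle i) (abs_nonneg _)

theorem sin_phi_formula {n : ℕ} (A : Matrix (Fin n) (Fin n) ℝ)
    (hSymm : A.IsSymm) (hPD : A.PosDef) (lam1 lamn : ℝ)
    (h1 : IsEigenvalue A lam1) (hn : IsEigenvalue A lamn)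
    (hbound : ∀ μ, IsEigenvalue A μ → lam1 ≤ μ ∧ μ ≤ lamn) :
    IsLeast {r : ℝ | ∃ ε : ℝ, 0 < ε ∧ r = ‖ε • A - 1‖}
      ((lamn - lam1) / (lamn + lam1)) := by
  classical
  obtain ⟨x1, hx1, hAx1⟩ := h1
  obtain ⟨xn, hxn, hAxn⟩ := hn
  have hherm : A.IsHermitian := by
    rw [Matrix.IsHermitian, Matrix.conjTranspose_eq_transpose_of_trivial]; exact hSymm
  -- positivity of lam1
  have hl1 : 0 < lam1 := by
    set x' : Fin n → ℝ := (WithLp.equiv 2 (Fin n → ℝ)) x1 with hx'def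
    have hx' : x' ≠ 0 := by
      intro h0
      exact hx1 ((WithLp.equiv 2 (Fin n → ℝ)).injective (by simpa [hx'def] using h0))
    have hp := hPD.dotProduct_mulVec_pos hx'
    have hmul : A.mulVec x' = lam1 • x' := by
      have := congrArg (WithLp.equiv 2 (Fin n → ℝ)) hAx1
      simpa [hx'def] using this
    rw [hmul] at hp
    have hq : 0 ≤ dotProduct x' x' := Finset.sum_nonneg fun i _ => mul_self_nonneg _
    simp only [star_trivial, dotProduct_smul, smul_eq_mul] at hp
    nlinarith
  have h1n : lam1 ≤ lamn := (hbound lamn ⟨xn, hxn, hAxn⟩).1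
  have hln : 0 < lamn := lt_of_lt_of_le hl1 h1n
  have hsum : (0:ℝ) < lam1 + lamn := by linarith
  have hsum' : (0:ℝ) < lamn + lam1 := by linarith
  set c := (lamn - lam1) / (lamn + lam1) with hcdef
  have hc0 : 0 ≤ c := div_nonneg (by linarith) (by linarith)
  have hcc : c * (lamn + lam1) = lamn - lam1 := div_mul_cancel₀ _ hsum'.ne'
  -- eigenvector transfer
  have hEig : ∀ (ε μ : ℝ) (x : EuclideanSpace ℝ (Fin n)),
      Matrix.toEuclideanLin A x = μ • x →
      Matrix.toEuclideanLin (ε • A - 1) x = (ε * μ - 1) • x := by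
    intro ε μ x hx
    have hexp : Matrix.toEuclideanLin (ε • A - 1) x
        = ε • Matrix.toEuclideanLin A x - x := by
      rw [map_sub, map_smul]
      simp [Matrix.toEuclideanLin_apply]
    rw [hexp, hx, smul_smul, sub_smul, one_smul]
  set ε₀ := 2 / (lam1 + lamn) with hε₀def
  have hε₀ : 0 < ε₀ := div_pos two_pos hsum
  have hε₀s : ε₀ * (lam1 + lamn) = 2 := div_mul_cancel₀ _ hsum.ne'
  clear_value c ε₀
  have hmem : c = ‖ε₀ • A - 1‖ := by
    have hlow : c ≤ ‖ε₀ • A - 1‖ := by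
      have h := eig_le_norm (ε₀ • A - 1) hxn (hEig ε₀ lamn xn hAxn)
      have hval : ε₀ * lamn - 1 = c := by
        rw [hε₀def, hcdef]; field_simp; ring
      rwa [hval, abs_of_nonneg hc0] at h
    have hup : ‖ε₀ • A - 1‖ ≤ c := by
      refine norm_le_of_eig _ ?_ hc0 ?_
      · simp [Matrix.IsHermitian, Matrix.conjTranspose_smul, hherm.eq, hSymm.eq]
      · rintro ν ⟨x, hx, hMx⟩
        have hexp : ε₀ • Matrix.toEuclideanLin A x - x = ν • x := by
          rw [← hMx, map_sub, map_smul]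
          simp [Matrix.toEuclideanLin_apply]
        have h2 : ε₀ • Matrix.toEuclideanLin A x = (ν + 1) • x := by
          rw [add_smul, one_smul, ← hexp]; abel
        have h3 : Matrix.toEuclideanLin A x = (ε₀⁻¹ * (ν + 1)) • x := by
          calc Matrix.toEuclideanLin A x
              = ε₀⁻¹ • (ε₀ • Matrix.toEuclideanLin A x) := by
                rw [smul_smul, inv_mul_cancel₀ hε₀.ne', one_smul]
            _ = (ε₀⁻¹ * (ν + 1)) • x := by rw [h2, smul_smul]
        obtain ⟨hb1, hb2⟩ := hbound _ ⟨x, hx, h3⟩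
        have hμν : ν = ε₀ * (ε₀⁻¹ * (ν + 1)) - 1 := by
          rw [← mul_assoc, mul_inv_cancel₀ hε₀.ne', one_mul]; ring
        have e3 : ε₀ * lam1 - 1 = -c := by
          rw [hε₀def, hcdef]; field_simp; ring
        have e4 : ε₀ * lamn - 1 = c := by
          rw [hε₀def, hcdef]; field_simp; ring
        rw [abs_le]
        constructor
        · linarith [mul_le_mul_of_nonneg_left hb1 hε₀.le, hμν, e3]
        · linarith [mul_le_mul_of_nonneg_left hb2 hε₀.le, hμν, e4]
    exact le_antisymm hlow hup
  constructor
  · exact ⟨ε₀, hε₀, hmem⟩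
  · rintro r ⟨ε, hε, rfl⟩
    have ha := abs_le.mp (eig_le_norm (ε • A - 1) hx1 (hEig ε lam1 x1 hAx1))
    have hb := abs_le.mp (eig_le_norm (ε • A - 1) hxn (hEig ε lamn xn hAxn))
    rw [hcdef, div_le_iff₀ hsum']
    nlinarith [mul_le_mul_of_nonneg_left hb.2 hl1.le,
      mul_le_mul_of_nonneg_left ha.1 hln.le]
end

section
/- Let A be a real symmetric positive definite n×n matrix with λ₁ < λₙ, and let x₁, xₙ be unit eigenvectors for λ₁, λₙ respectively. Then the vectors x± = (λₙ/(λ₁+λₙ))^{1/2} x₁ ± (λ₁/(λ₁+λₙ))^{1/2} xₙ are unit vectors that attain the minimum of ⟨Ax,x⟩/(‖Ax‖‖x‖) over nonzero x, with value 2√(λ₁λₙ)/(λ₁+λₙ). -/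
open scoped Matrix.Norms.L2Operator RealInnerProductSpace

lemma inner_toEuclideanLin_pos {n : ℕ} {A : Matrix (Fin n) (Fin n) ℝ}
    (hPD : A.PosDef) (y : EuclideanSpace ℝ (Fin n)) (hy : y ≠ 0) :
    0 < ⟪Matrix.toEuclideanLin A y, y⟫ := by
  have h := hPD.dotProduct_mulVec_pos (x := WithLp.equiv 2 _ y) (by simpa using hy)
  rw [real_inner_comm, EuclideanSpace.inner_eq_star_dotProduct]
  simpa [Matrix.toEuclideanLin_apply, dotProduct_comm] using h

lemma key_nonneg {n : ℕ} {A : Matrix (Fin n) (Fin n) ℝ}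
    (hT : (Matrix.toEuclideanLin A).IsSymmetric) {lam1 lamn : ℝ}
    (hbound : ∀ μ, IsEigenvalue A μ → lam1 ≤ μ ∧ μ ≤ lamn)
    (y : EuclideanSpace ℝ (Fin n)) :
    0 ≤ ⟪lamn • y - Matrix.toEuclideanLin A y, Matrix.toEuclideanLin A y - lam1 • y⟫ := by
  set T := Matrix.toEuclideanLin A with hTdef
  set b := hT.eigenvectorBasis finrank_euclideanSpace_fin with hb
  set μ := hT.eigenvalues finrank_euclideanSpace_fin with hmu
  have happ : ∀ i, T (b i) = μ i • b i := by
    intro i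
    exact_mod_cast hT.apply_eigenvectorBasis finrank_euclideanSpace_fin i
  rw [← b.sum_inner_mul_inner]
  apply Finset.sum_nonneg
  intro i _
  have hTyb : ⟪T y, b i⟫ = μ i * ⟪y, b i⟫ := by
    rw [hT y (b i), happ, real_inner_smul_right]
  have hbTy : ⟪b i, T y⟫ = μ i * ⟪b i, y⟫ := by
    rw [← hT (b i) y, happ, real_inner_smul_left]
  have h1 : ⟪lamn • y - T y, b i⟫ = (lamn - μ i) * ⟪y, b i⟫ := by
    rw [inner_sub_left, real_inner_smul_left, hTyb]; ring
  have h2 : ⟪b i, T y - lam1 • y⟫ = (μ i - lam1) * ⟪b i, y⟫ := by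
    rw [inner_sub_right, real_inner_smul_right, hbTy]; ring
  have hev : lam1 ≤ μ i ∧ μ i ≤ lamn :=
    hbound (μ i) ⟨b i, b.orthonormal.ne_zero i, happ i⟩
  rw [h1, h2, real_inner_comm y (b i)]
  have hnn : 0 ≤ (lamn - μ i) * (μ i - lam1) * ⟪y, b i⟫ ^ 2 :=
    mul_nonneg (mul_nonneg (sub_nonneg.2 hev.2) (sub_nonneg.2 hev.1)) (sq_nonneg _)
  nlinarith [hnn]

set_option maxHeartbeats 1000000 in
theorem antieigenvectors_attain_min {n : ℕ} (A : Matrix (Fin n) (Fin n) ℝ)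
    (hSymm : A.IsSymm) (hPD : A.PosDef) (lam1 lamn : ℝ) (hlt : lam1 < lamn)
    (hbound : ∀ μ, IsEigenvalue A μ → lam1 ≤ μ ∧ μ ≤ lamn)
    (x1 xn : EuclideanSpace ℝ (Fin n)) (hx1 : ‖x1‖ = 1) (hxn : ‖xn‖ = 1)
    (hex1 : Matrix.toEuclideanLin A x1 = lam1 • x1)
    (hexn : Matrix.toEuclideanLin A xn = lamn • xn) :
    ∀ s : ℝ, s = 1 ∨ s = -1 →
      let xpm : EuclideanSpace ℝ (Fin n) :=
        Real.sqrt (lamn / (lam1 + lamn)) • x1 + (s * Real.sqrt (lam1 / (lam1 + lamn))) • xn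
      ‖xpm‖ = 1 ∧ rq A xpm = 2 * Real.sqrt (lam1 * lamn) / (lam1 + lamn) ∧
        ∀ y : EuclideanSpace ℝ (Fin n), y ≠ 0 → rq A xpm ≤ rq A y := by
  intro s hs
  dsimp only
  set T := Matrix.toEuclideanLin A with hTdef
  have hT : T.IsSymmetric := Matrix.isHermitian_iff_isSymmetric.1 hPD.1
  have hx1ne : x1 ≠ 0 := fun h => by simp [h] at hx1
  have hxnne : xn ≠ 0 := fun h => by simp [h] at hxn
  have hlam1pos : 0 < lam1 := by
    have := inner_toEuclideanLin_pos hPD x1 hx1ne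
    rw [← hTdef, hex1, real_inner_smul_left, real_inner_self_eq_norm_sq, hx1] at this
    simpa using this
  have hlamnpos : 0 < lamn := lt_trans hlam1pos hlt
  have hSpos : 0 < lam1 + lamn := by linarith
  have hSne : lam1 + lamn ≠ 0 := ne_of_gt hSpos
  have horth : ⟪x1, xn⟫ = 0 := by
    have h1 : ⟪T x1, xn⟫ = lam1 * ⟪x1, xn⟫ := by
      rw [hex1, real_inner_smul_left]
    have h2 : ⟪T x1, xn⟫ = lamn * ⟪x1, xn⟫ := by
      rw [hT x1 xn, hexn, real_inner_smul_right]
    have h3 : (lamn - lam1) * ⟪x1, xn⟫ = 0 := by rw [sub_mul]; rw [h1] at h2; linarith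
    rcases mul_eq_zero.1 h3 with h | h
    · exact absurd h (by intro h; have := sub_eq_zero.1 h; linarith)
    · exact h
  set a : ℝ := Real.sqrt (lamn / (lam1 + lamn)) with hadef
  set c : ℝ := s * Real.sqrt (lam1 / (lam1 + lamn)) with hcdef
  have ha2 : a ^ 2 = lamn / (lam1 + lamn) :=
    Real.sq_sqrt (div_nonneg hlamnpos.le hSpos.le)
  have hs2 : s ^ 2 = 1 := by rcases hs with h | h <;> simp [h]
  have hc2 : c ^ 2 = lam1 / (lam1 + lamn) := by
    rw [hcdef, mul_pow, hs2, one_mul, Real.sq_sqrt (div_nonneg hlam1pos.le hSpos.le)]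
  clear_value a c
  set v : EuclideanSpace ℝ (Fin n) := a • x1 + c • xn with hvdef
  have hx1sq : ⟪x1, x1⟫ = 1 := by rw [real_inner_self_eq_norm_sq, hx1]; norm_num
  have hxnsq : ⟪xn, xn⟫ = 1 := by rw [real_inner_self_eq_norm_sq, hxn]; norm_num
  have horth' : ⟪xn, x1⟫ = 0 := by rw [real_inner_comm]; exact horth
  have hvinner : ⟪v, v⟫ = 1 := by
    simp only [hvdef, inner_add_left, inner_add_right, real_inner_smul_left,
      real_inner_smul_right, hx1sq, hxnsq, horth, horth']
    ring_nf
    rw [ha2, hc2]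
    field_simp
    try ring
  have hvnorm : ‖v‖ = 1 := by
    rw [norm_eq_sqrt_real_inner, hvinner, Real.sqrt_one]
  have hTv : T v = (a * lam1) • x1 + (c * lamn) • xn := by
    rw [hvdef, map_add, map_smul, map_smul, hex1, hexn, smul_smul, smul_smul]
  have hiTv : ⟪T v, v⟫ = 2 * (lam1 * lamn) / (lam1 + lamn) := by
    rw [hTv, hvdef]
    simp only [inner_add_left, inner_add_right, real_inner_smul_left,
      real_inner_smul_right, hx1sq, hxnsq, horth, horth']
    ring_nf
    rw [ha2, hc2]
    field_simp
    try ring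
  have hin : ⟪T v, T v⟫ = lam1 * lamn := by
    rw [hTv]
    simp only [inner_add_left, inner_add_right, real_inner_smul_left,
      real_inner_smul_right, hx1sq, hxnsq, horth, horth']
    ring_nf
    rw [ha2, hc2]
    field_simp
    try ring
  have hnTv : ‖T v‖ = Real.sqrt (lam1 * lamn) := by
    rw [norm_eq_sqrt_real_inner, hin]
  have hsqrtpos : 0 < Real.sqrt (lam1 * lamn) :=
    Real.sqrt_pos.2 (mul_pos hlam1pos hlamnpos)
  have hsqrtsq : Real.sqrt (lam1 * lamn) * Real.sqrt (lam1 * lamn) = lam1 * lamn :=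
    Real.mul_self_sqrt (mul_pos hlam1pos hlamnpos).le
  have hrq : rq A v = 2 * Real.sqrt (lam1 * lamn) / (lam1 + lamn) := by
    rw [rq, ← hTdef, hiTv, hnTv, hvnorm, mul_one]
    rw [div_div, div_eq_div_iff (by positivity) (by positivity)]
    nlinarith [hsqrtsq]
  refine ⟨hvnorm, hrq, ?_⟩
  intro y hy
  rw [hrq, rq, ← hTdef]
  have hTyy : 0 < ⟪T y, y⟫ := inner_toEuclideanLin_pos hPD y hy
  have hkey := key_nonneg hT hbound y
  rw [← hTdef] at hkey
  have hexp : ⟪lamn • y - T y, T y - lam1 • y⟫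
      = (lam1 + lamn) * ⟪T y, y⟫ - ‖T y‖ ^ 2 - lam1 * lamn * ‖y‖ ^ 2 := by
    simp only [inner_sub_left, inner_sub_right, real_inner_smul_left, real_inner_smul_right]
    rw [real_inner_comm y (T y), real_inner_self_eq_norm_sq, real_inner_self_eq_norm_sq]
    ring
  rw [hexp] at hkey
  have hTyne : T y ≠ 0 := by
    intro h
    rw [h] at hTyy
    simp at hTyy
  have hq : 0 < ‖T y‖ := norm_pos_iff.2 hTyne
  have hr : 0 < ‖y‖ := norm_pos_iff.2 hy
  have hamgm : 2 * Real.sqrt (lam1 * lamn) * (‖T y‖ * ‖y‖)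
      ≤ ‖T y‖ ^ 2 + lam1 * lamn * ‖y‖ ^ 2 := by
    nlinarith [sq_nonneg (‖T y‖ - Real.sqrt (lam1 * lamn) * ‖y‖), hsqrtsq]
  rw [div_le_div_iff₀ hSpos (by positivity)]
  linarith [hamgm, hkey]
end

section
/- For a 2×2 real symmetric positive definite matrix Σ with eigenvalues σ₁ ≥ σ₂ > 0, the minimum over ε > 0 of ‖εΣ − I‖ equals (σ₁−σ₂)/(σ₁+σ₂), i.e. sin φ(Σ) = τ/σ with σ = (σ₁+σ₂)/2 and τ = (σ₁−σ₂)/2. -/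
open scoped Matrix.Norms.L2Operator RealInnerProductSpace

lemma clm_eq_lin {n : ℕ} (M : Matrix (Fin n) (Fin n) ℝ) (x : EuclideanSpace ℝ (Fin n)) :
    Matrix.toEuclideanCLM (𝕜 := ℝ) M x = Matrix.toEuclideanLin M x :=
  LinearMap.congr_fun (Matrix.coe_toEuclideanCLM_eq_toEuclideanLin (𝕜 := ℝ) M) x

lemma abs_eig_le_norm {n : ℕ} {A : Matrix (Fin n) (Fin n) ℝ} {μ : ℝ}
    (h : IsEigenvalue A μ) : |μ| ≤ ‖A‖ := by
  obtain ⟨x, hx, hAx⟩ := h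
  have hle : ‖Matrix.toEuclideanCLM (𝕜 := ℝ) A x‖ ≤ ‖A‖ * ‖x‖ := by
    rw [Matrix.cstar_norm_def]
    exact (Matrix.toEuclideanCLM (𝕜 := ℝ) A).le_opNorm x
  rw [clm_eq_lin, hAx, norm_smul] at hle
  have hxpos : 0 < ‖x‖ := norm_pos_iff.mpr hx
  have := (mul_le_mul_iff_of_pos_right hxpos).mp hle
  simpa using this

lemma lin_shift {n : ℕ} (S : Matrix (Fin n) (Fin n) ℝ) (ε μ : ℝ)
    (x : EuclideanSpace ℝ (Fin n)) (hx : Matrix.toEuclideanLin S x = μ • x) :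
    Matrix.toEuclideanLin (ε • S - 1) x = (ε * μ - 1) • x := by
  have hone : Matrix.toEuclideanLin (1 : Matrix (Fin n) (Fin n) ℝ) x = x := by
    ext j
    simp [Matrix.toEuclideanLin_apply]
  rw [map_sub, map_smul]
  simp only [LinearMap.sub_apply, LinearMap.smul_apply, hx, hone, smul_smul, sub_smul, one_smul]

theorem sin_phi_two_by_two {S : Matrix (Fin 2) (Fin 2) ℝ}
    (hSymm : S.IsSymm) (hPD : S.PosDef) (σ1 σ2 : ℝ)
    (hσ : σ1 ≥ σ2) (hσ2 : σ2 > 0)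
    (h1 : IsEigenvalue S σ1) (h2 : IsEigenvalue S σ2)
    (hall : ∀ μ, IsEigenvalue S μ → μ = σ1 ∨ μ = σ2) :
    IsLeast {r : ℝ | ∃ ε : ℝ, 0 < ε ∧ r = ‖ε • S - 1‖}
      ((σ1 - σ2) / (σ1 + σ2)) ∧
    (σ1 - σ2) / (σ1 + σ2) = ((σ1 - σ2) / 2) / ((σ1 + σ2) / 2) := by
  have hσ1 : 0 < σ1 := lt_of_lt_of_le hσ2 hσ
  have hsum : 0 < σ1 + σ2 := by linarith
  set t : ℝ := (σ1 - σ2) / (σ1 + σ2) with ht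
  have ht0 : 0 ≤ t := div_nonneg (by linarith) hsum.le
  -- lower bound for any ε > 0
  have lb : ∀ r ∈ {r : ℝ | ∃ ε : ℝ, 0 < ε ∧ r = ‖ε • S - 1‖}, t ≤ r := by
    rintro r ⟨ε, hε, rfl⟩
    obtain ⟨x1, hx1, hSx1⟩ := h1
    obtain ⟨x2, hx2, hSx2⟩ := h2
    have e1 : |ε * σ1 - 1| ≤ ‖ε • S - 1‖ :=
      abs_eig_le_norm ⟨x1, hx1, lin_shift S ε σ1 x1 hSx1⟩
    have e2 : |ε * σ2 - 1| ≤ ‖ε • S - 1‖ :=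
      abs_eig_le_norm ⟨x2, hx2, lin_shift S ε σ2 x2 hSx2⟩
    have e1' : ε * σ1 - 1 ≤ ‖ε • S - 1‖ := (le_abs_self _).trans e1
    have e2' : 1 - ε * σ2 ≤ ‖ε • S - 1‖ := (le_abs_self _).trans (by rwa [abs_sub_comm] at e2)
    rw [ht, div_le_iff₀ hsum]
    nlinarith [mul_le_mul_of_nonneg_left e1' hσ2.le, mul_le_mul_of_nonneg_left e2' hσ1.le]
  refine ⟨⟨?_, lb⟩, by rw [ht]; field_simp⟩
  -- membership with ε₀ = 2 / (σ1 + σ2)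
  set ε : ℝ := 2 / (σ1 + σ2) with hε
  have hεpos : 0 < ε := by positivity
  refine ⟨ε, hεpos, ?_⟩
  have habs : ∀ μ, IsEigenvalue S μ → |ε * μ - 1| ≤ t := by
    intro μ hμ
    rcases hall μ hμ with rfl | rfl
    · have : ε * μ - 1 = t := by rw [hε, ht]; field_simp; ring
      rw [this, abs_of_nonneg ht0]
    · have : ε * μ - 1 = -t := by rw [hε, ht]; field_simp; ring
      rw [this, abs_neg, abs_of_nonneg ht0]
  -- upper bound ‖ε • S - 1‖ ≤ t
  have hA : S.IsHermitian := hPD.1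
  set b := hA.eigenvectorBasis with hb
  have heig : ∀ i, Matrix.toEuclideanLin S (b i) = hA.eigenvalues i • b i := by
    intro i
    ext j
    have := congrFun (hA.mulVec_eigenvectorBasis i) j
    simpa [Matrix.toEuclideanLin_apply] using this
  have hIsE : ∀ i, IsEigenvalue S (hA.eigenvalues i) := fun i =>
    ⟨b i, b.orthonormal.ne_zero i, heig i⟩
  have hM : (ε • S - 1 : Matrix (Fin 2) (Fin 2) ℝ).IsHermitian := by
    simp only [Matrix.IsHermitian, Matrix.conjTranspose_sub, Matrix.conjTranspose_smul,
      Matrix.conjTranspose_one, hA.eq, star_trivial]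
  have hsymL : (Matrix.toEuclideanLin (ε • S - 1)).IsSymmetric :=
    Matrix.isHermitian_iff_isSymmetric.mp hM
  have hnorm_sq : ∀ y : EuclideanSpace ℝ (Fin 2), ‖y‖ ^ 2 = ∑ i, (b.repr y i) ^ 2 := by
    intro y
    rw [← b.repr.norm_map y, EuclideanSpace.norm_eq, Real.sq_sqrt (by positivity)]
    simp [sq_abs]
  have hub : ‖ε • S - 1‖ ≤ t := by
    rw [Matrix.cstar_norm_def]
    refine ContinuousLinearMap.opNorm_le_bound _ ht0 ?_
    intro x
    have hrepr : ∀ i, b.repr (Matrix.toEuclideanCLM (𝕜 := ℝ) (ε • S - 1) x) i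
        = (ε * hA.eigenvalues i - 1) * b.repr x i := by
      intro i
      rw [b.repr_apply_apply, b.repr_apply_apply, clm_eq_lin, ← hsymL (b i) x,
        lin_shift S ε (hA.eigenvalues i) (b i) (heig i), real_inner_smul_left]
    have hsq : ‖Matrix.toEuclideanCLM (𝕜 := ℝ) (ε • S - 1) x‖ ^ 2 ≤ (t * ‖x‖) ^ 2 := by
      rw [hnorm_sq, mul_pow, hnorm_sq x, Finset.mul_sum]
      refine Finset.sum_le_sum fun i _ => ?_
      rw [hrepr i, mul_pow]
      have := habs _ (hIsE i)
      have h2 : (ε * hA.eigenvalues i - 1) ^ 2 ≤ t ^ 2 := by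
        rw [← sq_abs]
        exact pow_le_pow_left₀ (abs_nonneg _) this 2
      exact mul_le_mul_of_nonneg_right h2 (sq_nonneg _)
    have h0 : (0 : ℝ) ≤ t * ‖x‖ := mul_nonneg ht0 (norm_nonneg _)
    nlinarith [norm_nonneg (Matrix.toEuclideanCLM (𝕜 := ℝ) (ε • S - 1) x)]
  -- lower bound at ε
  have hlb : t ≤ ‖ε • S - 1‖ := lb _ ⟨ε, hεpos, rfl⟩
  linarith
end

section
/- For positive reals r₁, r₂, the quantity G = 2√(r₁r₂)/(r₁+r₂) equals the first antieigenvalue μ₁ = min_{x≠0} ⟨Ax,x⟩/(‖Ax‖‖x‖) of the 2×2 diagonal matrix A = diag(r₁, r₂). -/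
open scoped Matrix.Norms.L2Operator RealInnerProductSpace

lemma rq_diag (r1 r2 : ℝ) (x : EuclideanSpace ℝ (Fin 2)) :
    rq (Matrix.diagonal ![r1, r2]) x =
      (r1 * (x 0)^2 + r2 * (x 1)^2) /
        (Real.sqrt (r1^2 * (x 0)^2 + r2^2 * (x 1)^2) * Real.sqrt ((x 0)^2 + (x 1)^2)) := by
  have h0 : Matrix.toEuclideanLin (Matrix.diagonal ![r1, r2]) x 0 = r1 * x 0 := by
    simp [Matrix.toEuclideanLin_apply, Matrix.mulVec_diagonal]
  have h1 : Matrix.toEuclideanLin (Matrix.diagonal ![r1, r2]) x 1 = r2 * x 1 := by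
    simp [Matrix.toEuclideanLin_apply, Matrix.mulVec_diagonal]
  have hn : ‖Matrix.toEuclideanLin (Matrix.diagonal ![r1, r2]) x‖ =
      Real.sqrt (r1^2 * (x 0)^2 + r2^2 * (x 1)^2) := by
    rw [EuclideanSpace.norm_eq]
    simp [Fin.sum_univ_two, h0, h1, sq_abs, sq]
    ring_nf
  have hn2 : ‖x‖ = Real.sqrt ((x 0)^2 + (x 1)^2) := by
    rw [EuclideanSpace.norm_eq]
    simp [Fin.sum_univ_two, sq_abs, sq]
  have hi : ⟪Matrix.toEuclideanLin (Matrix.diagonal ![r1, r2]) x, x⟫ =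
      r1 * (x 0)^2 + r2 * (x 1)^2 := by
    simp [PiLp.inner_apply, Fin.sum_univ_two, h0, h1, sq]
    ring
  rw [rq, hi, hn, hn2]

lemma arith (r1 r2 a b : ℝ) (hr1 : 0 < r1) (hr2 : 0 < r2) (hab : a^2 + b^2 ≠ 0) :
    2 * Real.sqrt (r1 * r2) / (r1 + r2) ≤
      (r1 * a^2 + r2 * b^2) /
        (Real.sqrt (r1^2 * a^2 + r2^2 * b^2) * Real.sqrt (a^2 + b^2)) := by
  have hy : 0 < a^2 + b^2 := lt_of_le_of_ne (by positivity) (Ne.symm hab)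
  have hab' : a ≠ 0 ∨ b ≠ 0 := by
    by_contra h; push_neg at h; simp [h.1, h.2] at hab
  have hx : 0 < r1^2 * a^2 + r2^2 * b^2 := by
    rcases hab' with h | h
    · have : 0 < a^2 := by positivity
      nlinarith [mul_pos (pow_pos hr1 2) this, sq_nonneg (r2*b)]
    · have : 0 < b^2 := by positivity
      nlinarith [mul_pos (pow_pos hr2 2) this, sq_nonneg (r1*a)]
  have hden : 0 < Real.sqrt (r1^2 * a^2 + r2^2 * b^2) * Real.sqrt (a^2 + b^2) := by
    positivity
  have hr12 : 0 < r1 + r2 := by linarith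
  rw [div_le_div_iff₀ hr12 hden]
  have key : Real.sqrt (4 * (r1 * r2) * ((r1^2 * a^2 + r2^2 * b^2) * (a^2 + b^2)))
      = 2 * Real.sqrt (r1 * r2) * (Real.sqrt (r1^2 * a^2 + r2^2 * b^2) * Real.sqrt (a^2 + b^2)) := by
    rw [Real.sqrt_mul (by positivity), Real.sqrt_mul (by positivity),
      Real.sqrt_mul (by positivity : (0:ℝ) ≤ r1^2 * a^2 + r2^2 * b^2) (a^2+b^2), show (4:ℝ) = 2^2 by norm_num,
      Real.sqrt_sq (by norm_num : (0:ℝ) ≤ 2)]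

  rw [← key]
  have hR : 0 ≤ (r1 * a^2 + r2 * b^2) * (r1 + r2) := by positivity
  rw [show (r1*a^2 + r2*b^2) * (r1+r2) = Real.sqrt (((r1*a^2+r2*b^2)*(r1+r2))^2) from
    (Real.sqrt_sq hR).symm]
  apply Real.sqrt_le_sqrt
  nlinarith [sq_nonneg ((r1-r2)*(r1*a^2 - r2*b^2)), sq_nonneg (a*b), mul_pos hr1 hr2]

theorem sharpe_ratio_is_antieigenvalue (r1 r2 : ℝ) (hr1 : 0 < r1) (hr2 : 0 < r2) :
    IsLeast {r : ℝ | ∃ x : EuclideanSpace ℝ (Fin 2), x ≠ 0 ∧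
        r = rq (Matrix.diagonal ![r1, r2]) x}
      (2 * Real.sqrt (r1 * r2) / (r1 + r2)) := by
  constructor
  · -- membership: witness (√r2, √r1)
    refine ⟨(WithLp.equiv 2 (Fin 2 → ℝ)).symm ![Real.sqrt r2, Real.sqrt r1], ?_, ?_⟩
    · intro h
      have h0 : Real.sqrt r2 = 0 := by
        have := congrFun (congrArg (WithLp.equiv 2 (Fin 2 → ℝ)) h) 0
        simpa using this
      exact absurd (Real.sqrt_eq_zero hr2.le |>.mp h0) (ne_of_gt hr2)
    · rw [rq_diag]
      have e0 : ((WithLp.equiv 2 (Fin 2 → ℝ)).symm ![Real.sqrt r2, Real.sqrt r1]) 0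
          = Real.sqrt r2 := rfl
      have e1 : ((WithLp.equiv 2 (Fin 2 → ℝ)).symm ![Real.sqrt r2, Real.sqrt r1]) 1
          = Real.sqrt r1 := rfl
      rw [e0, e1, Real.sq_sqrt hr2.le, Real.sq_sqrt hr1.le]
      have h1 : r1^2 * r2 + r2^2 * r1 = (r1 * r2) * (r1 + r2) := by ring
      have h2 : Real.sqrt ((r1*r2)*(r1+r2)) = Real.sqrt (r1*r2) * Real.sqrt (r1+r2) :=
        Real.sqrt_mul (by positivity) _
      have h3 : Real.sqrt (r2 + r1) = Real.sqrt (r1 + r2) := by ring_nf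
      rw [h1, h2, h3]
      have hs : 0 < Real.sqrt (r1 * r2) := Real.sqrt_pos.mpr (by positivity)
      have hs2 : 0 < Real.sqrt (r1 + r2) := Real.sqrt_pos.mpr (by linarith)
      have hsq : Real.sqrt (r1+r2) * Real.sqrt (r1+r2) = r1 + r2 :=
        Real.mul_self_sqrt (by linarith)
      have hsq2 : Real.sqrt (r1*r2) * Real.sqrt (r1*r2) = r1 * r2 :=
        Real.mul_self_sqrt (by positivity)
      have hnum : r1*r2 + r2*r1 = 2*(Real.sqrt (r1*r2) * Real.sqrt (r1*r2)) := by
        rw [hsq2]; ring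
      rw [mul_assoc, hsq, hnum, div_eq_div_iff (by positivity) (by positivity)]
      ring
  · rintro r ⟨x, hx, rfl⟩
    rw [rq_diag]
    apply arith r1 r2 _ _ hr1 hr2
    intro h
    apply hx
    have h0 : x 0 = 0 ∧ x 1 = 0 := by
      constructor <;> nlinarith [sq_nonneg (x 0), sq_nonneg (x 1)]
    ext i
    fin_cases i
    · exact h0.1
    · exact h0.2
end

section
/- Let m > n > 0 be integers and A = diag(n², m²). The unit vectors x± = (1/√(m²+n²))·(m, ±n) attain the minimum of ⟨Ax,x⟩/(‖Ax‖‖x‖) over nonzero x in ℝ², with value 2mn/(m²+n²). -/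
open scoped Matrix.Norms.L2Operator RealInnerProductSpace

lemma rq_eval (p q : ℝ) (y : EuclideanSpace ℝ (Fin 2)) :
    rq (Matrix.diagonal ![p, q]) y =
      (p * (y 0)^2 + q * (y 1)^2) /
        (Real.sqrt (p^2 * (y 0)^2 + q^2 * (y 1)^2) * Real.sqrt ((y 0)^2 + (y 1)^2)) := by
  have hAy : ∀ i, (Matrix.toEuclideanLin (Matrix.diagonal ![p, q]) y) i
      = ![p, q] i * y i := by
    intro i
    simp [Matrix.toEuclideanLin_apply, Matrix.mulVec_diagonal]
    fin_cases i <;> simp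
  have h1 : ⟪Matrix.toEuclideanLin (Matrix.diagonal ![p, q]) y, y⟫
      = p * (y 0)^2 + q * (y 1)^2 := by
    simp [PiLp.inner_apply, Fin.sum_univ_two, hAy]
    ring
  have h2 : ‖Matrix.toEuclideanLin (Matrix.diagonal ![p, q]) y‖
      = Real.sqrt (p^2 * (y 0)^2 + q^2 * (y 1)^2) := by
    rw [EuclideanSpace.norm_eq]
    congr 1
    simp [Fin.sum_univ_two, hAy, sq_abs]
    rw [mul_pow, mul_pow, sq_abs, sq_abs, sq_abs, sq_abs]
  have h3 : ‖y‖ = Real.sqrt ((y 0)^2 + (y 1)^2) := by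
    rw [EuclideanSpace.norm_eq]
    congr 1
    simp [Fin.sum_univ_two, sq_abs]
  rw [rq, h1, h2, h3]

lemma key_ineq (m n : ℕ) (hn : 0 < n) (hmn : n < m) (a b : ℝ)
    (hab : a ≠ 0 ∨ b ≠ 0) :
    2 * m * n / ((m : ℝ)^2 + (n : ℝ)^2) ≤
      ((n : ℝ)^2 * a^2 + (m : ℝ)^2 * b^2) /
        (Real.sqrt (((n : ℝ)^2)^2 * a^2 + ((m : ℝ)^2)^2 * b^2) * Real.sqrt (a^2 + b^2)) := by
  have hm0 : (0 : ℝ) < m := by exact_mod_cast hn.trans hmn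
  have hn0 : (0 : ℝ) < n := by exact_mod_cast hn
  set p : ℝ := (n : ℝ)^2 with hp
  set q : ℝ := (m : ℝ)^2 with hq
  set u : ℝ := a^2 with hu
  set v : ℝ := b^2 with hv
  have hY : (0 : ℝ) < u + v := by
    rcases hab with h | h
    · have : 0 < u := by positivity
      nlinarith [sq_nonneg b]
    · have : 0 < v := by positivity
      nlinarith [sq_nonneg a]
  have hX : (0 : ℝ) < p^2 * u + q^2 * v := by
    rcases hab with h | h
    · have hu' : 0 < u := by positivity
      have : 0 < p^2 := by positivity
      nlinarith [sq_nonneg q, hv ▸ sq_nonneg b, mul_nonneg (sq_nonneg q) (sq_nonneg b)]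
    · have hv' : 0 < v := by positivity
      have : 0 < q^2 := by positivity
      nlinarith [mul_nonneg (sq_nonneg p) (sq_nonneg a)]
  have hD : 0 < Real.sqrt (p^2 * u + q^2 * v) * Real.sqrt (u + v) :=
    mul_pos (Real.sqrt_pos.2 hX) (Real.sqrt_pos.2 hY)
  have hpq : (0 : ℝ) < (m : ℝ)^2 + (n : ℝ)^2 := by positivity
  rw [div_le_div_iff₀ hpq hD]
  have hsq : 2 * (m : ℝ) * n * (Real.sqrt (p^2 * u + q^2 * v) * Real.sqrt (u + v))
      = Real.sqrt ((2 * m * n)^2 * ((p^2 * u + q^2 * v) * (u + v))) := by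
    rw [← Real.sqrt_mul hX.le,
      Real.sqrt_mul (by positivity : (0:ℝ) ≤ (2 * m * n)^2), Real.sqrt_sq (by positivity)]
  rw [hsq]
  have hR : (0 : ℝ) ≤ (p * u + q * v) * ((m : ℝ)^2 + (n : ℝ)^2) := by
    have : (0 : ℝ) ≤ p * u + q * v := by positivity
    positivity
  calc Real.sqrt ((2 * m * n)^2 * ((p^2 * u + q^2 * v) * (u + v)))
      ≤ Real.sqrt (((p * u + q * v) * ((m : ℝ)^2 + (n : ℝ)^2))^2) := by
        apply Real.sqrt_le_sqrt
        have hid : ((p * u + q * v) * ((m : ℝ)^2 + (n : ℝ)^2))^2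
              - (2 * m * n)^2 * ((p^2 * u + q^2 * v) * (u + v))
            = (q - p)^2 * (p * u - q * v)^2 := by
          rw [hp, hq]
          ring
        nlinarith [sq_nonneg ((q - p) * (p * u - q * v)), hid, mul_pow (q - p) (p * u - q * v) 2]
    _ = (p * u + q * v) * ((m : ℝ)^2 + (n : ℝ)^2) := Real.sqrt_sq hR
    _ = (p * u + q * v) * ((m : ℝ)^2 + (n : ℝ)^2) := rfl

theorem pythagorean_antieigenvectors (m n : ℕ) (hn : 0 < n) (hmn : n < m) :
    ∀ s : ℝ, s = 1 ∨ s = -1 →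
      let A : Matrix (Fin 2) (Fin 2) ℝ := Matrix.diagonal ![(n : ℝ) ^ 2, (m : ℝ) ^ 2]
      let xpm : EuclideanSpace ℝ (Fin 2) :=
        (1 / Real.sqrt ((m : ℝ) ^ 2 + (n : ℝ) ^ 2)) •
          (WithLp.equiv 2 (Fin 2 → ℝ)).symm ![(m : ℝ), s * n]
      ‖xpm‖ = 1 ∧ rq A xpm = 2 * m * n / ((m : ℝ) ^ 2 + (n : ℝ) ^ 2) ∧
        ∀ y : EuclideanSpace ℝ (Fin 2), y ≠ 0 → rq A xpm ≤ rq A y := by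
  intro s hs A xpm
  have hm0 : (0 : ℝ) < m := by exact_mod_cast hn.trans hmn
  have hn0 : (0 : ℝ) < n := by exact_mod_cast hn
  have hpq : (0 : ℝ) < (m : ℝ)^2 + (n : ℝ)^2 := by positivity
  have hr : (0 : ℝ) < Real.sqrt ((m : ℝ)^2 + (n : ℝ)^2) := Real.sqrt_pos.2 hpq
  have hr2 : Real.sqrt ((m : ℝ)^2 + (n : ℝ)^2) ^ 2 = (m : ℝ)^2 + (n : ℝ)^2 :=
    Real.sq_sqrt hpq.le
  have hs2 : s^2 = 1 := by rcases hs with h | h <;> rw [h] <;> norm_num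
  have hx0 : xpm 0 = (m : ℝ) / Real.sqrt ((m : ℝ)^2 + (n : ℝ)^2) := by
    show (1 / Real.sqrt ((m : ℝ)^2 + (n : ℝ)^2)) * ![(m : ℝ), s * n] 0 = _
    simp [div_eq_mul_inv, mul_comm]
  have hx1 : xpm 1 = s * n / Real.sqrt ((m : ℝ)^2 + (n : ℝ)^2) := by
    show (1 / Real.sqrt ((m : ℝ)^2 + (n : ℝ)^2)) * ![(m : ℝ), s * n] 1 = _
    simp [div_eq_mul_inv, mul_comm]
  have hsum : (xpm 0)^2 + (xpm 1)^2 = 1 := by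
    rw [hx0, hx1, div_pow, div_pow, hr2, mul_pow, hs2]
    field_simp
  have hnorm : ‖xpm‖ = 1 := by
    rw [EuclideanSpace.norm_eq]
    have : ∑ i : Fin 2, ‖xpm i‖^2 = 1 := by
      rw [Fin.sum_univ_two, Real.norm_eq_abs, Real.norm_eq_abs, sq_abs, sq_abs, hsum]
    rw [this, Real.sqrt_one]
  have hX : ((n : ℝ)^2)^2 * (xpm 0)^2 + ((m : ℝ)^2)^2 * (xpm 1)^2 = ((m : ℝ) * n)^2 := by
    rw [hx0, hx1, div_pow, div_pow, hr2, mul_pow, hs2]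
    field_simp
    ring
  have hN : (n : ℝ)^2 * (xpm 0)^2 + (m : ℝ)^2 * (xpm 1)^2
      = 2 * (m : ℝ)^2 * (n : ℝ)^2 / ((m : ℝ)^2 + (n : ℝ)^2) := by
    rw [hx0, hx1, div_pow, div_pow, hr2, mul_pow, hs2]
    field_simp
    ring
  have hval : rq A xpm = 2 * m * n / ((m : ℝ)^2 + (n : ℝ)^2) := by
    rw [show A = Matrix.diagonal ![(n : ℝ)^2, (m : ℝ)^2] from rfl, rq_eval, hX, hN, hsum,
      Real.sqrt_one, Real.sqrt_sq (by positivity), mul_one]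
    field_simp
  refine ⟨hnorm, hval, ?_⟩
  intro y hy
  rw [hval, show A = Matrix.diagonal ![(n : ℝ)^2, (m : ℝ)^2] from rfl, rq_eval]
  apply key_ineq m n hn hmn
  by_contra h
  push_neg at h
  apply hy
  ext i
  fin_cases i
  · exact h.1
  · exact h.2
end

section
/- Let A and B be real symmetric positive definite n×n matrices. If sin φ(B) ≤ cos φ(A), i.e. (μₙ−μ₁)/(μₙ+μ₁) ≤ 2√(λ₁λₙ)/(λ₁+λₙ) where λ's and μ's are the extreme eigenvalues of A and B respectively, then the product BA is real positive in the sense that ⟨BAx, x⟩ ≥ 0 for all x ∈ ℝⁿ. -/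
open scoped Matrix.Norms.L2Operator RealInnerProductSpace

lemma my_posdef_inner {n : ℕ} {A : Matrix (Fin n) (Fin n) ℝ} (hAPD : A.PosDef)
    {x : EuclideanSpace ℝ (Fin n)} (hx : x ≠ 0) : 0 < ⟪Matrix.toEuclideanLin A x, x⟫ := by
  have := hAPD.dotProduct_mulVec_pos (x := (WithLp.equiv 2 _) x) (by simpa using hx)
  rw [Matrix.toEuclideanLin_apply, real_inner_comm]
  simpa [PiLp.inner_apply, dotProduct, mul_comm] using this

lemma my_eig_pos {n : ℕ} {A : Matrix (Fin n) (Fin n) ℝ} (hAPD : A.PosDef)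
    {μ : ℝ} (h : IsEigenvalue A μ) : 0 < μ := by
  obtain ⟨z, hz, hze⟩ := h
  have h1 := my_posdef_inner hAPD hz
  rw [hze, real_inner_smul_left] at h1
  have h2 : 0 < ⟪z, z⟫ := by
    rw [real_inner_self_eq_norm_sq]
    exact pow_pos (norm_pos_iff.2 hz) 2
  nlinarith


variable {n : ℕ} {T : EuclideanSpace ℝ (Fin n) →ₗ[ℝ] EuclideanSpace ℝ (Fin n)}

lemma my_inner_basis_map (hT : T.IsSymmetric) (x : EuclideanSpace ℝ (Fin n)) (i : Fin n) :
    ⟪hT.eigenvectorBasis finrank_euclideanSpace_fin i, T x⟫ =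
      hT.eigenvalues finrank_euclideanSpace_fin i *
        ⟪hT.eigenvectorBasis finrank_euclideanSpace_fin i, x⟫ := by
  rw [← hT (hT.eigenvectorBasis finrank_euclideanSpace_fin i) x,
    hT.apply_eigenvectorBasis, real_inner_smul_left]
  simp only [RCLike.ofReal_real_eq_id, id_eq, starRingEnd_apply, star_trivial]

lemma my_inner_map_eq_sum (hT : T.IsSymmetric) (x y : EuclideanSpace ℝ (Fin n)) :
    ⟪T x, y⟫ = ∑ i, (hT.eigenvalues finrank_euclideanSpace_fin i) *
      (⟪hT.eigenvectorBasis finrank_euclideanSpace_fin i, x⟫ *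
       ⟪hT.eigenvectorBasis finrank_euclideanSpace_fin i, y⟫) := by
  rw [← (hT.eigenvectorBasis finrank_euclideanSpace_fin).sum_inner_mul_inner (T x) y]
  refine Finset.sum_congr rfl fun i _ => ?_
  rw [real_inner_comm (hT.eigenvectorBasis finrank_euclideanSpace_fin i) (T x),
    my_inner_basis_map hT x i]
  ring

lemma my_eig_bound (hT : T.IsSymmetric) {a c : ℝ}
    (hbd : ∀ μ z, z ≠ (0 : EuclideanSpace ℝ (Fin n)) → T z = μ • z → a ≤ μ ∧ μ ≤ c)
    (i : Fin n) : a ≤ hT.eigenvalues finrank_euclideanSpace_fin i ∧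
      hT.eigenvalues finrank_euclideanSpace_fin i ≤ c := by
  refine hbd _ (hT.eigenvectorBasis finrank_euclideanSpace_fin i) ?_ ?_
  · exact (hT.eigenvectorBasis finrank_euclideanSpace_fin).toBasis.ne_zero i
  · simpa using hT.apply_eigenvectorBasis finrank_euclideanSpace_fin i

lemma my_sums (hT : T.IsSymmetric) (x : EuclideanSpace ℝ (Fin n)) :
    ⟪x, x⟫ = (∑ i, ⟪hT.eigenvectorBasis finrank_euclideanSpace_fin i, x⟫ *
        ⟪hT.eigenvectorBasis finrank_euclideanSpace_fin i, x⟫) ∧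
    ⟪T x, x⟫ = (∑ i, hT.eigenvalues finrank_euclideanSpace_fin i *
        (⟪hT.eigenvectorBasis finrank_euclideanSpace_fin i, x⟫ *
         ⟪hT.eigenvectorBasis finrank_euclideanSpace_fin i, x⟫)) ∧
    ⟪T x, T x⟫ = (∑ i, hT.eigenvalues finrank_euclideanSpace_fin i *
        hT.eigenvalues finrank_euclideanSpace_fin i *
        (⟪hT.eigenvectorBasis finrank_euclideanSpace_fin i, x⟫ *
         ⟪hT.eigenvectorBasis finrank_euclideanSpace_fin i, x⟫)) := by
  refine ⟨?_, my_inner_map_eq_sum hT x x, ?_⟩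
  · rw [← (hT.eigenvectorBasis finrank_euclideanSpace_fin).sum_inner_mul_inner x x]
    exact Finset.sum_congr rfl fun i _ => by
      rw [real_inner_comm (hT.eigenvectorBasis finrank_euclideanSpace_fin i) x]
  · rw [my_inner_map_eq_sum hT x (T x)]
    refine Finset.sum_congr rfl fun i _ => ?_
    rw [my_inner_basis_map hT x i]; ring

/-- Kantorovich-type inequality -/
lemma my_kantorovich (hT : T.IsSymmetric) {a c : ℝ} (ha : 0 < a) (hac : a ≤ c)
    (hbd : ∀ μ z, z ≠ (0 : EuclideanSpace ℝ (Fin n)) → T z = μ • z → a ≤ μ ∧ μ ≤ c)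
    (x : EuclideanSpace ℝ (Fin n)) :
    2 * Real.sqrt (a * c) * (‖T x‖ * ‖x‖) ≤ (a + c) * ⟪T x, x⟫ := by
  obtain ⟨hxx, hTxx, hTT⟩ := my_sums hT x
  have key : ⟪T x, T x⟫ + a * c * ⟪x, x⟫ ≤ (a + c) * ⟪T x, x⟫ := by
    rw [hxx, hTxx, hTT, Finset.mul_sum, Finset.mul_sum, ← Finset.sum_add_distrib]
    refine Finset.sum_le_sum fun i _ => ?_
    have hbi := my_eig_bound hT hbd i
    have hsq : (0:ℝ) ≤ ⟪hT.eigenvectorBasis finrank_euclideanSpace_fin i, x⟫ *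
        ⟪hT.eigenvectorBasis finrank_euclideanSpace_fin i, x⟫ := mul_self_nonneg _
    nlinarith [mul_nonneg (mul_nonneg (sub_nonneg.2 hbi.1) (sub_nonneg.2 hbi.2)) hsq]
  have hs : Real.sqrt (a * c) ^ 2 = a * c := Real.sq_sqrt (by nlinarith)
  have hTx2 : ⟪T x, T x⟫ = ‖T x‖ ^ 2 := real_inner_self_eq_norm_sq _
  have hx2 : ⟪x, x⟫ = ‖x‖ ^ 2 := real_inner_self_eq_norm_sq _
  nlinarith [sq_nonneg (‖T x‖ - Real.sqrt (a * c) * ‖x‖), Real.sqrt_nonneg (a*c),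
    norm_nonneg (T x), norm_nonneg x]

/-- deviation norm bound -/
lemma my_dev_bound (hT : T.IsSymmetric) {a c : ℝ} (hac : a ≤ c)
    (hbd : ∀ μ z, z ≠ (0 : EuclideanSpace ℝ (Fin n)) → T z = μ • z → a ≤ μ ∧ μ ≤ c)
    (x : EuclideanSpace ℝ (Fin n)) :
    ‖T x - ((a + c) / 2) • x‖ ≤ (c - a) / 2 * ‖x‖ := by
  obtain ⟨hxx, hTxx, hTT⟩ := my_sums hT x
  have e1 : ⟪T x - ((a + c) / 2) • x, T x - ((a + c) / 2) • x⟫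
      = ⟪T x, T x⟫ - 2 * ((a + c) / 2) * ⟪T x, x⟫ + ((a + c) / 2) ^ 2 * ⟪x, x⟫ := by
    simp only [inner_sub_sub_self, real_inner_smul_left, real_inner_smul_right,
      real_inner_comm (T x) x]
    ring
  have hle : ⟪T x - ((a + c) / 2) • x, T x - ((a + c) / 2) • x⟫
      ≤ ((c - a) / 2) ^ 2 * ⟪x, x⟫ := by
    rw [e1, hxx, hTxx, hTT, Finset.mul_sum, Finset.mul_sum, Finset.mul_sum,
      ← Finset.sum_sub_distrib, ← Finset.sum_add_distrib]
    refine Finset.sum_le_sum fun i _ => ?_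
    have hbi := my_eig_bound hT hbd i
    have hsq : (0:ℝ) ≤ ⟪hT.eigenvectorBasis finrank_euclideanSpace_fin i, x⟫ *
        ⟪hT.eigenvectorBasis finrank_euclideanSpace_fin i, x⟫ := mul_self_nonneg _
    nlinarith [mul_nonneg (mul_nonneg (sub_nonneg.2 hbi.1) (sub_nonneg.2 hbi.2)) hsq]
  have h1 : ‖T x - ((a + c) / 2) • x‖ ^ 2 ≤ ((c - a) / 2 * ‖x‖) ^ 2 := by
    rw [← real_inner_self_eq_norm_sq]
    calc ⟪T x - ((a + c) / 2) • x, T x - ((a + c) / 2) • x⟫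
        ≤ ((c - a) / 2) ^ 2 * ⟪x, x⟫ := hle
      _ = ((c - a) / 2 * ‖x‖) ^ 2 := by rw [real_inner_self_eq_norm_sq]; ring
  have h2 : (0:ℝ) ≤ (c - a) / 2 * ‖x‖ := mul_nonneg (by linarith) (norm_nonneg x)
  nlinarith [norm_nonneg (T x - ((a + c) / 2) • x)]


theorem positivity_of_product {n : ℕ} (A B : Matrix (Fin n) (Fin n) ℝ)
    (hASymm : A.IsSymm) (hAPD : A.PosDef) (hBSymm : B.IsSymm) (hBPD : B.PosDef)
    (lam1 lamn mu1 mun : ℝ)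
    (hA1 : IsEigenvalue A lam1) (hAn : IsEigenvalue A lamn)
    (hAbound : ∀ μ, IsEigenvalue A μ → lam1 ≤ μ ∧ μ ≤ lamn)
    (hB1 : IsEigenvalue B mu1) (hBn : IsEigenvalue B mun)
    (hBbound : ∀ μ, IsEigenvalue B μ → mu1 ≤ μ ∧ μ ≤ mun)
    (hcond : (mun - mu1) / (mun + mu1) ≤ 2 * Real.sqrt (lam1 * lamn) / (lam1 + lamn)) :
    ∀ x : EuclideanSpace ℝ (Fin n), 0 ≤ ⟪Matrix.toEuclideanLin (B * A) x, x⟫ := by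
  intro x
  have hTs : (Matrix.toEuclideanLin A).IsSymmetric :=
    Matrix.isHermitian_iff_isSymmetric.1 hAPD.1
  have hSs : (Matrix.toEuclideanLin B).IsSymmetric :=
    Matrix.isHermitian_iff_isSymmetric.1 hBPD.1
  have hA' : ∀ μ z, z ≠ (0 : EuclideanSpace ℝ (Fin n)) →
      Matrix.toEuclideanLin A z = μ • z → lam1 ≤ μ ∧ μ ≤ lamn :=
    fun μ z hz hzμ => hAbound μ ⟨z, hz, hzμ⟩
  have hB' : ∀ μ z, z ≠ (0 : EuclideanSpace ℝ (Fin n)) →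
      Matrix.toEuclideanLin B z = μ • z → mu1 ≤ μ ∧ μ ≤ mun :=
    fun μ z hz hzμ => hBbound μ ⟨z, hz, hzμ⟩
  have hl1 : 0 < lam1 := my_eig_pos hAPD hA1
  have hm1 : 0 < mu1 := my_eig_pos hBPD hB1
  have hl1n : lam1 ≤ lamn := (hAbound lam1 hA1).2
  have hm1n : mu1 ≤ mun := (hBbound mu1 hB1).2
  set y := Matrix.toEuclideanLin A x with hy
  have hcomp : Matrix.toEuclideanLin (B * A) x = Matrix.toEuclideanLin B y := by
    rw [hy]; simp [Matrix.toEuclideanLin_apply, Matrix.mulVec_mulVec]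
  have hK := my_kantorovich hTs hl1 hl1n hA' x
  have hD := my_dev_bound hSs hm1n hB' y
  have hinner : ⟪Matrix.toEuclideanLin B y, x⟫ = ((mu1 + mun) / 2) * ⟪y, x⟫ +
      ⟪Matrix.toEuclideanLin B y - ((mu1 + mun) / 2) • y, x⟫ := by
    rw [inner_sub_left, real_inner_smul_left]; ring
  have habs := abs_real_inner_le_norm
    (Matrix.toEuclideanLin B y - ((mu1 + mun) / 2) • y) x
  have hin2 : -((mun - mu1) / 2 * (‖y‖ * ‖x‖)) ≤
      ⟪Matrix.toEuclideanLin B y - ((mu1 + mun) / 2) • y, x⟫ := by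
    have h1 := (abs_le.1 habs).1
    have h2 : ‖Matrix.toEuclideanLin B y - ((mu1 + mun) / 2) • y‖ * ‖x‖ ≤
        (mun - mu1) / 2 * ‖y‖ * ‖x‖ := mul_le_mul_of_nonneg_right hD (norm_nonneg x)
    have := neg_abs_le ⟪Matrix.toEuclideanLin B y - ((mu1 + mun) / 2) • y, x⟫
    linarith [(abs_le.1 habs).1]
  have hN : (0:ℝ) ≤ ‖y‖ * ‖x‖ := mul_nonneg (norm_nonneg _) (norm_nonneg _)
  have hcond' : (mun - mu1) * (lam1 + lamn) ≤ 2 * Real.sqrt (lam1 * lamn) * (mun + mu1) :=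
    (div_le_div_iff₀ (by linarith) (by linarith)).1 hcond
  have hTxx : ⟪y, x⟫ = ⟪Matrix.toEuclideanLin A x, x⟫ := by rw [hy]
  have hclaim : (mun - mu1) / 2 * (‖y‖ * ‖x‖) ≤ (mu1 + mun) / 2 * ⟪y, x⟫ := by
    have hL : (0:ℝ) < lam1 + lamn := by linarith
    have hM : (0:ℝ) < mun + mu1 := by linarith
    have e1 : (mun - mu1) * (lam1 + lamn) * (‖y‖ * ‖x‖) ≤
        2 * Real.sqrt (lam1 * lamn) * (mun + mu1) * (‖y‖ * ‖x‖) :=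
      mul_le_mul_of_nonneg_right hcond' hN
    have e2 : (mun + mu1) * (2 * Real.sqrt (lam1 * lamn) * (‖y‖ * ‖x‖)) ≤
        (mun + mu1) * ((lam1 + lamn) * ⟪y, x⟫) :=
      mul_le_mul_of_nonneg_left hK (le_of_lt hM)
    nlinarith [e1, e2, hL, hM]
  rw [hcomp, hinner]
  linarith [hin2, hclaim]
end

section
/- Let A be a real symmetric positive definite n×n matrix with λ₁ < λₙ and x₁, xₙ orthonormal eigenvectors for λ₁, λₙ. For the antieigenvector x₊ = (λₙ/(λ₁+λₙ))^{1/2} x₁ + (λ₁/(λ₁+λₙ))^{1/2} xₙ, the angle between x₊ and A x₊ satisfies cos(angle) = 2√(λ₁λₙ)/(λ₁+λₙ), i.e. ⟨A x₊, x₊⟩ = (2√(λ₁λₙ)/(λ₁+λₙ))·‖A x₊‖·‖x₊‖. -/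
open scoped Matrix.Norms.L2Operator RealInnerProductSpace

lemma posdef_inner_pos {n : ℕ} (A : Matrix (Fin n) (Fin n) ℝ) (hPD : A.PosDef)
    (x : EuclideanSpace ℝ (Fin n)) (hx : x ≠ 0) :
    0 < ⟪Matrix.toEuclideanLin A x, x⟫ := by
  have := hPD.dotProduct_mulVec_pos (x := WithLp.equiv 2 _ x) (by simpa using hx)
  rw [Matrix.toEuclideanLin_apply, real_inner_comm]
  simpa [EuclideanSpace.inner_eq_star_dotProduct, dotProduct, mul_comm] using this

theorem antieigenvector_angle {n : ℕ} (A : Matrix (Fin n) (Fin n) ℝ)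
    (hSymm : A.IsSymm) (hPD : A.PosDef) (lam1 lamn : ℝ) (hlt : lam1 < lamn)
    (hbound : ∀ μ, IsEigenvalue A μ → lam1 ≤ μ ∧ μ ≤ lamn)
    (x1 xn : EuclideanSpace ℝ (Fin n)) (hx1 : ‖x1‖ = 1) (hxn : ‖xn‖ = 1)
    (horth : ⟪x1, xn⟫ = 0)
    (hex1 : Matrix.toEuclideanLin A x1 = lam1 • x1)
    (hexn : Matrix.toEuclideanLin A xn = lamn • xn) :
    let xp : EuclideanSpace ℝ (Fin n) :=
      Real.sqrt (lamn / (lam1 + lamn)) • x1 + Real.sqrt (lam1 / (lam1 + lamn)) • xn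
    ⟪Matrix.toEuclideanLin A xp, xp⟫ =
      (2 * Real.sqrt (lam1 * lamn) / (lam1 + lamn)) *
        ‖Matrix.toEuclideanLin A xp‖ * ‖xp‖ := by
  intro xp
  have hi11 : ⟪x1, x1⟫ = 1 := by
    rw [real_inner_self_eq_norm_mul_norm, hx1]; ring
  have hinn : ⟪xn, xn⟫ = 1 := by
    rw [real_inner_self_eq_norm_mul_norm, hxn]; ring
  have horth' : ⟪xn, x1⟫ = 0 := by rw [real_inner_comm]; exact horth
  have hx1ne : x1 ≠ 0 := fun h => by simp [h] at hx1
  have hxnne : xn ≠ 0 := fun h => by simp [h] at hxn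
  have hl1 : 0 < lam1 := by
    have := posdef_inner_pos A hPD x1 hx1ne
    rw [hex1, real_inner_smul_left, hi11] at this
    linarith
  have hln : 0 < lamn := lt_trans hl1 hlt
  have hs : 0 < lam1 + lamn := by linarith
  have hsne : lam1 + lamn ≠ 0 := ne_of_gt hs
  set a := Real.sqrt (lamn / (lam1 + lamn)) with ha
  set b := Real.sqrt (lam1 / (lam1 + lamn)) with hb
  have ha2 : a * a = lamn / (lam1 + lamn) := Real.mul_self_sqrt (by positivity)
  have hb2 : b * b = lam1 / (lam1 + lamn) := Real.mul_self_sqrt (by positivity)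
  have ha2' : a * a * (lam1 + lamn) = lamn := by rw [ha2]; field_simp
  have hb2' : b * b * (lam1 + lamn) = lam1 := by rw [hb2]; field_simp
  have hAxp : Matrix.toEuclideanLin A xp = (a * lam1) • x1 + (b * lamn) • xn := by
    simp only [xp, map_add, map_smul, hex1, hexn, smul_smul]
    rfl
  have hinner : ⟪Matrix.toEuclideanLin A xp, xp⟫ = 2 * (lam1 * lamn) / (lam1 + lamn) := by
    simp only [hAxp, xp, inner_add_left, inner_add_right, real_inner_smul_left,
      real_inner_smul_right, hi11, hinn, horth, horth']
    rw [eq_div_iff hsne]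
    linear_combination lam1 * ha2' + lamn * hb2'
  have hnxp : ‖xp‖ = 1 := by
    have h : ‖xp‖ * ‖xp‖ = 1 := by
      rw [← real_inner_self_eq_norm_mul_norm]
      simp only [xp, inner_add_left, inner_add_right, real_inner_smul_left,
        real_inner_smul_right, hi11, hinn, horth, horth']
      apply mul_right_cancel₀ hsne
      linear_combination ha2' + hb2'
    nlinarith [norm_nonneg xp, h]
  have hnAxp : ‖Matrix.toEuclideanLin A xp‖ = Real.sqrt (lam1 * lamn) := by
    have h : ‖Matrix.toEuclideanLin A xp‖ * ‖Matrix.toEuclideanLin A xp‖ = lam1 * lamn := by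
      rw [← real_inner_self_eq_norm_mul_norm]
      simp only [hAxp, inner_add_left, inner_add_right, real_inner_smul_left,
        real_inner_smul_right, hi11, hinn, horth, horth']
      apply mul_right_cancel₀ hsne
      linear_combination (lam1 * lam1) * ha2' + (lamn * lamn) * hb2'
    rw [← Real.sqrt_mul_self (norm_nonneg _), h]
  rw [hinner, hnxp, hnAxp]
  have hss : Real.sqrt (lam1 * lamn) * Real.sqrt (lam1 * lamn) = lam1 * lamn :=
    Real.mul_self_sqrt (by positivity)
  linear_combination (-2 / (lam1 + lamn)) * hss
end
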